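/- Let X be a real Banach space with dim X ≥ 2 and let κ, τ > 0. Then √(κ² + τ²) ≤ T₁(κ,τ,X) ≤ κ + τ. -/

import Mathlib

/-- The constant `T₁(κ,τ,X) = sup{ (‖κx + τy‖ ‖κx − τy‖)^{1/2} : x, y ∈ S(X) }`. -/
noncomputable def T1 (X : Type*) [NormedAddCommGroup X] [NormedSpace ℝ X] (κ τ : ℝ) : ℝ :=
  sSup {r : ℝ | ∃ x y : X, ‖x‖ = 1 ∧ ‖y‖ = 1 ∧
    r = Real.sqrt (‖κ • x + τ • y‖ * ‖κ • x - τ • y‖)}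

set_option maxHeartbeats 1000000 in
/-- Key geometric lemma: in a space of dimension ≥ 2 there exist unit vectors `x, y`
with `κ² + τ² ≤ ‖κx + τy‖ ‖κx − τy‖`.  Proof: take a pair `(x,y)` of unit vectors in a
2-dimensional subspace maximizing the (coordinate) area form `Ω`; then
`Ω(κx+τy, τx−κy) = −(κ²+τ²) Ω(x,y)` and `Ω(κx−τy, τx+κy) = (κ²+τ²) Ω(x,y)`, whence
`(‖κx+τy‖‖κx−τy‖) ⬝ (‖κy+τx‖‖κy−τx‖) ≥ (κ²+τ²)²`, so one of the ordered pairs works. -/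
lemma exists_good_pair {X : Type*} [NormedAddCommGroup X] [NormedSpace ℝ X]
    (hdim : 2 ≤ Module.rank ℝ X) (κ τ : ℝ) (hκ : 0 < κ) (hτ : 0 < τ) :
    ∃ x y : X, ‖x‖ = 1 ∧ ‖y‖ = 1 ∧
      κ ^ 2 + τ ^ 2 ≤ ‖κ • x + τ • y‖ * ‖κ • x - τ • y‖ := by
  obtain ⟨v, hv⟩ := exists_linearIndependent_of_le_rank (R := ℝ) (M := X)
    (n := 2) (by exact_mod_cast hdim)
  set V : Submodule ℝ X := Submodule.span ℝ (Set.range v) with hV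
  haveI : FiniteDimensional ℝ V := FiniteDimensional.span_of_finite ℝ (Set.finite_range v)
  -- an "area form" on V which is nonzero somewhere, obtained from a basis, then made opaque
  obtain ⟨Ω, hΩcont, hΩalt, hΩskew, u₀, w₀, hΩ1⟩ :
      ∃ Ω : V →ₗ[ℝ] V →ₗ[ℝ] ℝ, (Continuous fun p : V × V => Ω p.1 p.2) ∧
        (∀ u : V, Ω u u = 0) ∧ (∀ u w : V, Ω w u = -(Ω u w)) ∧
        ∃ u₀ w₀ : V, Ω u₀ w₀ = 1 := by
    let B : Module.Basis (Fin 2) ℝ V := Module.Basis.span hv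
    refine ⟨LinearMap.mk₂ ℝ
      (fun u w => B.coord 0 u * B.coord 1 w - B.coord 1 u * B.coord 0 w)
      (by intro m m' w; simp only [map_add]; ring)
      (by intro c m w; simp only [map_smul, smul_eq_mul]; ring)
      (by intro m w w'; simp only [map_add]; ring)
      (by intro c m w; simp only [map_smul, smul_eq_mul]; ring), ?_, ?_, ?_, B 0, B 1, ?_⟩
    · have h0 : Continuous fun u : V => (B.coord 0) u :=
        (B.coord 0).continuous_of_finiteDimensional
      have h1 : Continuous fun u : V => (B.coord 1) u :=
        (B.coord 1).continuous_of_finiteDimensional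
      simp only [LinearMap.mk₂_apply]
      exact ((h0.comp continuous_fst).mul (h1.comp continuous_snd)).sub
        ((h1.comp continuous_fst).mul (h0.comp continuous_snd))
    · intro u
      simp only [LinearMap.mk₂_apply]
      ring
    · intro u w
      simp only [LinearMap.mk₂_apply]
      ring
    · simp [LinearMap.mk₂_apply, Module.Basis.coord_apply, Module.Basis.repr_self]
  -- maximize |Ω| on the product of unit spheres
  have hu₀ : u₀ ≠ 0 := by
    rintro rfl
    simp at hΩ1
  have hw₀ : w₀ ≠ 0 := by
    rintro rfl
    simp at hΩ1
  have hunit : ∀ u : V, u ≠ 0 → ‖(‖u‖⁻¹ : ℝ) • u‖ = 1 := by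
    intro u hu
    exact norm_smul_inv_norm (𝕜 := ℝ) hu
  have hKcomp : IsCompact ((Metric.sphere (0:V) 1) ×ˢ (Metric.sphere (0:V) 1)) :=
    (isCompact_sphere 0 1).prod (isCompact_sphere 0 1)
  have hmemq : ((‖u₀‖⁻¹ • u₀, ‖w₀‖⁻¹ • w₀) : V × V) ∈
      (Metric.sphere (0:V) 1) ×ˢ (Metric.sphere (0:V) 1) :=
    ⟨mem_sphere_zero_iff_norm.mpr (hunit _ hu₀), mem_sphere_zero_iff_norm.mpr (hunit _ hw₀)⟩
  have hKne : ((Metric.sphere (0:V) 1) ×ˢ (Metric.sphere (0:V) 1)).Nonempty := ⟨_, hmemq⟩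
  obtain ⟨p, hpK, hp⟩ := hKcomp.exists_isMaxOn hKne
    (continuous_abs.comp hΩcont).continuousOn
  obtain ⟨x, y⟩ := p
  have hx1 : ‖x‖ = 1 := mem_sphere_zero_iff_norm.mp hpK.1
  have hy1 : ‖y‖ = 1 := mem_sphere_zero_iff_norm.mp hpK.2
  set C : ℝ := |Ω x y| with hC
  have hmax : ∀ u w : V, ‖u‖ = 1 → ‖w‖ = 1 → |Ω u w| ≤ C := by
    intro u w hu hw
    exact hp (⟨mem_sphere_zero_iff_norm.mpr hu, mem_sphere_zero_iff_norm.mpr hw⟩ :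
      ((u, w) : V × V) ∈ (Metric.sphere (0:V) 1) ×ˢ (Metric.sphere (0:V) 1))
  have hΩ_smul : ∀ (a b : ℝ) (u w : V), Ω (a • u) (b • w) = a * b * Ω u w := by
    intro a b u w
    simp only [map_smul, LinearMap.smul_apply, smul_eq_mul]
    ring
  -- C is positive
  have hu₀n : (0:ℝ) < ‖u₀‖ := norm_pos_iff.mpr hu₀
  have hw₀n : (0:ℝ) < ‖w₀‖ := norm_pos_iff.mpr hw₀
  have hCpos : 0 < C := by
    have hq := hmax _ _ (hunit _ hu₀) (hunit _ hw₀)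
    rw [hΩ_smul, hΩ1, mul_one, abs_of_pos (by positivity)] at hq
    have : (0:ℝ) < ‖u₀‖⁻¹ * ‖w₀‖⁻¹ := by positivity
    linarith
  -- the fundamental bound |Ω u w| ≤ C ‖u‖ ‖w‖
  have hbound : ∀ u w : V, |Ω u w| ≤ C * (‖u‖ * ‖w‖) := by
    intro u w
    rcases eq_or_ne u 0 with rfl | hu
    · simp only [map_zero, LinearMap.zero_apply, abs_zero]
      positivity
    rcases eq_or_ne w 0 with rfl | hw
    · simp only [map_zero, abs_zero]
      positivity
    have hun : (0:ℝ) < ‖u‖ := norm_pos_iff.mpr hu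
    have hwn : (0:ℝ) < ‖w‖ := norm_pos_iff.mpr hw
    have h := hmax _ _ (hunit _ hu) (hunit _ hw)
    rw [hΩ_smul, abs_mul, abs_of_pos (by positivity : (0:ℝ) < ‖u‖⁻¹ * ‖w‖⁻¹)] at h
    have hcancel : (‖u‖ * ‖w‖) * (‖u‖⁻¹ * ‖w‖⁻¹) = 1 := by
      rw [mul_mul_mul_comm, mul_inv_cancel₀ hun.ne', mul_inv_cancel₀ hwn.ne', one_mul]
    calc |Ω u w| = ((‖u‖ * ‖w‖) * (‖u‖⁻¹ * ‖w‖⁻¹)) * |Ω u w| := by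
          rw [hcancel, one_mul]
    _ = (‖u‖ * ‖w‖) * ((‖u‖⁻¹ * ‖w‖⁻¹) * |Ω u w|) := by ring
    _ ≤ (‖u‖ * ‖w‖) * C := mul_le_mul_of_nonneg_left h (by positivity)
    _ = C * (‖u‖ * ‖w‖) := by ring
  -- the two key identities
  have hxx : Ω x x = 0 := hΩalt x
  have hyy : Ω y y = 0 := hΩalt y
  have hyx : Ω y x = -(Ω x y) := hΩskew x y
  have hid1 : Ω (κ • x + τ • y) (τ • x - κ • y) = -((κ^2 + τ^2) * Ω x y) := by
    simp only [map_add, map_sub, map_smul, LinearMap.add_apply, LinearMap.sub_apply,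
      LinearMap.smul_apply, smul_eq_mul, hxx, hyy, hyx]
    ring
  have hid2 : Ω (κ • x - τ • y) (τ • x + κ • y) = (κ^2 + τ^2) * Ω x y := by
    simp only [map_add, map_sub, map_smul, LinearMap.add_apply, LinearMap.sub_apply,
      LinearMap.smul_apply, smul_eq_mul, hxx, hyy, hyx]
    ring
  set K2 : ℝ := κ^2 + τ^2 with hK2
  have hK2pos : 0 < K2 := by positivity
  -- from the identities and the bound:
  have h1 : K2 ≤ ‖κ • x + τ • y‖ * ‖τ • x - κ • y‖ := by
    have hb := hbound (κ • x + τ • y) (τ • x - κ • y)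
    rw [hid1, abs_neg, abs_mul, abs_of_pos hK2pos, ← hC] at hb
    nlinarith [hCpos, norm_nonneg (κ • x + τ • y), norm_nonneg (τ • x - κ • y)]
  have h2 : K2 ≤ ‖κ • x - τ • y‖ * ‖τ • x + κ • y‖ := by
    have hb := hbound (κ • x - τ • y) (τ • x + κ • y)
    rw [hid2, abs_mul, abs_of_pos hK2pos, ← hC] at hb
    nlinarith [hCpos, norm_nonneg (κ • x - τ • y), norm_nonneg (τ • x + κ • y)]
  -- rewrite the second factors
  have e1 : ‖τ • x - κ • y‖ = ‖κ • y - τ • x‖ := by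
    rw [← norm_neg]; congr 1; abel
  have e2 : ‖τ • x + κ • y‖ = ‖κ • y + τ • x‖ := by
    congr 1; abel
  set P1 : ℝ := ‖κ • x + τ • y‖ * ‖κ • x - τ • y‖ with hP1
  set P2 : ℝ := ‖κ • y + τ • x‖ * ‖κ • y - τ • x‖ with hP2
  have hprod : K2 ^ 2 ≤ P1 * P2 := by
    have h1' : K2 ≤ ‖κ • x + τ • y‖ * ‖κ • y - τ • x‖ := by rw [← e1]; exact h1
    have h2' : K2 ≤ ‖κ • x - τ • y‖ * ‖κ • y + τ • x‖ := by rw [← e2]; exact h2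
    have hm := mul_le_mul h1' h2' hK2pos.le (by positivity)
    calc K2 ^ 2 = K2 * K2 := sq K2
    _ ≤ (‖κ • x + τ • y‖ * ‖κ • y - τ • x‖) * (‖κ • x - τ • y‖ * ‖κ • y + τ • x‖) := hm
    _ = P1 * P2 := by rw [hP1, hP2]; ring
  -- one of the two pairs works
  have hP1nonneg : 0 ≤ P1 := by positivity
  have hP2nonneg : 0 ≤ P2 := by positivity
  have hkey : K2 ≤ P1 ∨ K2 ≤ P2 := by
    by_contra hcon
    push_neg at hcon
    obtain ⟨hA, hB⟩ := hcon
    nlinarith [hprod, hK2pos, hP1nonneg, hP2nonneg]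
  -- transfer norms from V to X
  have hnorm_coe : ∀ u : V, ‖(u : X)‖ = ‖u‖ := fun u => rfl
  have hcoe_comb_add : ∀ (a b : ℝ) (u w : V),
      a • (u : X) + b • (w : X) = ((a • u + b • w : V) : X) := by
    intro a b u w
    simp
  have hcoe_comb_sub : ∀ (a b : ℝ) (u w : V),
      a • (u : X) - b • (w : X) = ((a • u - b • w : V) : X) := by
    intro a b u w
    simp
  rcases hkey with hgood | hgood
  · refine ⟨(x : X), (y : X), ?_, ?_, ?_⟩
    · rw [hnorm_coe]; exact hx1
    · rw [hnorm_coe]; exact hy1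
    · rw [hcoe_comb_add, hcoe_comb_sub, hnorm_coe, hnorm_coe]
      exact hgood
  · refine ⟨(y : X), (x : X), ?_, ?_, ?_⟩
    · rw [hnorm_coe]; exact hy1
    · rw [hnorm_coe]; exact hx1
    · rw [hcoe_comb_add, hcoe_comb_sub, hnorm_coe, hnorm_coe]
      exact hgood

/-- For a real Banach space `X` with `dim X ≥ 2` and `κ, τ > 0`,
`√(κ² + τ²) ≤ T₁(κ,τ,X) ≤ κ + τ`. -/
theorem stmt3 {X : Type*} [NormedAddCommGroup X] [NormedSpace ℝ X] [CompleteSpace X]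
    (hdim : 2 ≤ Module.rank ℝ X) (κ τ : ℝ) (hκ : 0 < κ) (hτ : 0 < τ) :
    Real.sqrt (κ ^ 2 + τ ^ 2) ≤ T1 X κ τ ∧ T1 X κ τ ≤ κ + τ := by
  set S : Set ℝ := {r : ℝ | ∃ x y : X, ‖x‖ = 1 ∧ ‖y‖ = 1 ∧
    r = Real.sqrt (‖κ • x + τ • y‖ * ‖κ • x - τ • y‖)} with hS
  have hT1 : T1 X κ τ = sSup S := rfl
  -- every element of S is ≤ κ + τ
  have hub : ∀ r ∈ S, r ≤ κ + τ := by
    rintro r ⟨x, y, hx, hy, rfl⟩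
    have hA : ‖κ • x + τ • y‖ ≤ κ + τ := by
      calc ‖κ • x + τ • y‖ ≤ ‖κ • x‖ + ‖τ • y‖ := norm_add_le _ _
      _ = κ + τ := by
          rw [norm_smul, norm_smul, hx, hy, Real.norm_eq_abs, Real.norm_eq_abs,
            abs_of_pos hκ, abs_of_pos hτ, mul_one, mul_one]
    have hB : ‖κ • x - τ • y‖ ≤ κ + τ := by
      calc ‖κ • x - τ • y‖ ≤ ‖κ • x‖ + ‖τ • y‖ := norm_sub_le _ _
      _ = κ + τ := by
          rw [norm_smul, norm_smul, hx, hy, Real.norm_eq_abs, Real.norm_eq_abs,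
            abs_of_pos hκ, abs_of_pos hτ, mul_one, mul_one]
    have hmul : ‖κ • x + τ • y‖ * ‖κ • x - τ • y‖ ≤ (κ + τ) ^ 2 := by
      have h1 : (0:ℝ) ≤ ‖κ • x + τ • y‖ := norm_nonneg _
      nlinarith [norm_nonneg (κ • x - τ • y)]
    calc Real.sqrt (‖κ • x + τ • y‖ * ‖κ • x - τ • y‖) ≤ Real.sqrt ((κ + τ) ^ 2) :=
          Real.sqrt_le_sqrt hmul
    _ = κ + τ := by
          rw [Real.sqrt_sq (by positivity)]
  have hbdd : BddAbove S := ⟨κ + τ, hub⟩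
  -- the good element
  obtain ⟨x, y, hx, hy, hge⟩ := exists_good_pair hdim κ τ hκ hτ
  have hmem : Real.sqrt (‖κ • x + τ • y‖ * ‖κ • x - τ • y‖) ∈ S := ⟨x, y, hx, hy, rfl⟩
  constructor
  · calc Real.sqrt (κ ^ 2 + τ ^ 2)
        ≤ Real.sqrt (‖κ • x + τ • y‖ * ‖κ • x - τ • y‖) := Real.sqrt_le_sqrt hge
    _ ≤ sSup S := le_csSup hbdd hmem
  · exact csSup_le ⟨_, hmem⟩ hub
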